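/- For p, q > 1 and 0 < s ≤ r < 1, one has arsinh_{p,q}(s)/(s^p/(1+s^q))^{1/p} ≤ arsinh_{p,q}(r)/(r^p/(1+r^q))^{1/p}. -/

import Mathlib

open Real Set

noncomputable def arsinhpq (p q x : ℝ) : ℝ :=
  ∫ t in (0:ℝ)..x, (1 + t ^ q) ^ (-1/p)

lemma pos_aux (q x : ℝ) (hx : 0 ≤ x) : (0:ℝ) < 1 + x ^ q := by
  have := Real.rpow_nonneg hx q
  linarith

lemma contOn_aux (c q x : ℝ) (hc : 0 ≤ c) (hq : 0 ≤ q) (hx : 0 ≤ x) :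
    ContinuousOn (fun τ : ℝ => ((1 + x ^ q) / (1 + (x * τ) ^ q)) ^ c) (Icc 0 1) := by
  have hbase : ContinuousOn (fun τ : ℝ => 1 + (x * τ) ^ q) (Icc 0 1) :=
    continuousOn_const.add ((Real.continuous_rpow_const hq).comp
      (continuous_const.mul continuous_id)).continuousOn
  have hne : ∀ τ ∈ Icc (0:ℝ) 1, 1 + (x * τ) ^ q ≠ 0 := fun τ hτ =>
    (pos_aux q _ (mul_nonneg hx hτ.1)).ne'
  exact (continuousOn_const.div hbase hne).rpow_const fun τ hτ => Or.inr hc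

lemma key (p q x : ℝ) (hp : 1 < p) (hq : 1 < q) (hx : 0 < x) :
    arsinhpq p q x / (x ^ p / (1 + x ^ q)) ^ (1/p)
      = ∫ τ in (0:ℝ)..1, ((1 + x ^ q) / (1 + (x * τ) ^ q)) ^ (1/p) := by
  have hp0 : (0:ℝ) < p := by linarith
  have hb : (0:ℝ) < 1 + x ^ q := pos_aux q x hx.le
  have hden : (x ^ p / (1 + x ^ q)) ^ (1/p) = x / (1 + x ^ q) ^ (1/p) := by
    rw [Real.div_rpow (by positivity) hb.le, ← Real.rpow_mul hx.le, mul_one_div,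
      div_self hp0.ne', Real.rpow_one]
  have hsub : arsinhpq p q x = x * ∫ τ in (0:ℝ)..1, (1 + (x * τ) ^ q) ^ (-1/p) := by
    unfold arsinhpq
    have := intervalIntegral.smul_integral_comp_mul_left
      (fun t : ℝ => (1 + t ^ q) ^ (-1/p)) (a := (0:ℝ)) (b := 1) x
    rw [smul_eq_mul, mul_zero, mul_one] at this
    rw [← this]
  rw [hsub, hden]
  have halg : x * (∫ τ in (0:ℝ)..1, (1 + (x * τ) ^ q) ^ (-1/p)) / (x / (1 + x ^ q) ^ (1/p))
      = (1 + x ^ q) ^ (1/p) * ∫ τ in (0:ℝ)..1, (1 + (x * τ) ^ q) ^ (-1/p) := by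
    field_simp
  rw [halg, ← intervalIntegral.integral_const_mul]
  apply intervalIntegral.integral_congr
  intro τ hτ
  rw [uIcc_of_le (by norm_num)] at hτ
  have htb : (0:ℝ) < 1 + (x * τ) ^ q := pos_aux q _ (by have := hτ.1; positivity)
  simp only
  rw [Real.div_rpow hb.le htb.le, neg_div, Real.rpow_neg htb.le, ← div_eq_mul_inv]
  -- done

theorem stmt18 (p q r s : ℝ) (hp : 1 < p) (hq : 1 < q)
    (hs : 0 < s) (hsr : s ≤ r) (hr : r < 1) :
    arsinhpq p q s / (s ^ p / (1 + s ^ q)) ^ (1/p) ≤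
      arsinhpq p q r / (r ^ p / (1 + r ^ q)) ^ (1/p) := by
  have hr0 : 0 < r := lt_of_lt_of_le hs hsr
  rw [key p q s hp hq hs, key p q r hp hq hr0]
  apply intervalIntegral.integral_mono_on (by norm_num)
  · exact (contOn_aux (1/p) q s (by positivity) (by linarith) hs.le).intervalIntegrable_of_Icc (by norm_num)
  · exact (contOn_aux (1/p) q r (by positivity) (by linarith) hr0.le).intervalIntegrable_of_Icc (by norm_num)
  · intro τ hτ
    have hτ0 := hτ.1
    have hsb : (0:ℝ) < 1 + (s * τ) ^ q := pos_aux q _ (by positivity)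
    have hrb : (0:ℝ) < 1 + (r * τ) ^ q := pos_aux q _ (by positivity)
    apply Real.rpow_le_rpow (by positivity) _ (by positivity)
    rw [div_le_div_iff₀ hsb hrb]
    have hmulq : ∀ a : ℝ, 0 ≤ a → (a * τ) ^ q = a ^ q * τ ^ q := fun a ha =>
      Real.mul_rpow ha hτ0
    rw [hmulq s hs.le, hmulq r hr0.le]
    have hτq : τ ^ q ≤ 1 := Real.rpow_le_one hτ0 hτ.2 (by linarith)
    have hsrq : s ^ q ≤ r ^ q := Real.rpow_le_rpow hs.le hsr (by linarith)
    nlinarith [Real.rpow_nonneg hτ0 q]
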